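/- Let A = diag(1,4), X the 2×2 matrix with diagonal entries 1 and off-diagonal entries 1/2, and B = XAX. Then Tr(A ♮ B) = 5 while Tr(A # B) = 40/√73 < 5; consequently Tr(A + B + 2(A#B)) < Tr(A + B + 2(A ♮ B)), so the eigenvalue vector of A + B + 2(A ♮ B) is not weakly majorized by that of A + B + 2(A # B). -/

import Mathlib

open Matrix ComplexOrder

namespace Matrix.PosSemidef

variable {m 𝕜 : Type*} [Fintype m] [DecidableEq m] [RCLike 𝕜]

noncomputable def sqrt {A : Matrix m m 𝕜} (hA : A.PosSemidef) : Matrix m m 𝕜 :=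
  hA.1.eigenvectorUnitary.1 * diagonal ((↑) ∘ (√·) ∘ hA.1.eigenvalues) *
    (star hA.1.eigenvectorUnitary : Matrix m m 𝕜)

lemma posSemidef_sqrt {A : Matrix m m 𝕜} (hA : A.PosSemidef) : PosSemidef hA.sqrt := by
  apply PosSemidef.mul_mul_conjTranspose_same
  refine posSemidef_diagonal_iff.mpr fun i ↦ ?_
  rw [Function.comp_apply, RCLike.nonneg_iff]
  constructor
  · simp only [RCLike.ofReal_re]; exact Real.sqrt_nonneg _
  · simp only [RCLike.ofReal_im]

end Matrix.PosSemidef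

namespace Heron

variable {n : ℕ}

def WeakMaj {n : ℕ} (x y : Fin n → ℝ) : Prop :=
  ∀ s : Finset (Fin n), ∃ t : Finset (Fin n),
    t.card = s.card ∧ ∑ i ∈ s, x i ≤ ∑ i ∈ t, y i

def Maj {n : ℕ} (x y : Fin n → ℝ) : Prop :=
  WeakMaj x y ∧ ∑ i, x i = ∑ i, y i

lemma sandwich_posSemidef {S T : Matrix (Fin n) (Fin n) ℂ} (hS : S.IsHermitian)
    (hT : T.PosSemidef) : (S * T * S).PosSemidef := by
  have h := hT.mul_mul_conjTranspose_same S
  rwa [hS.eq] at h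

noncomputable def geomMean {A B : Matrix (Fin n) (Fin n) ℂ}
    (hA : A.PosDef) (hB : B.PosDef) : Matrix (Fin n) (Fin n) ℂ :=
  hA.posSemidef.sqrt *
    (sandwich_posSemidef hA.posSemidef.posSemidef_sqrt.isHermitian.inv
        hB.posSemidef).sqrt *
    hA.posSemidef.sqrt

lemma geomMean_posSemidef {A B : Matrix (Fin n) (Fin n) ℂ}
    (hA : A.PosDef) (hB : B.PosDef) : (geomMean hA hB).PosSemidef :=
  sandwich_posSemidef hA.posSemidef.posSemidef_sqrt.isHermitian
    (Matrix.PosSemidef.posSemidef_sqrt _)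

noncomputable def specMean {A B : Matrix (Fin n) (Fin n) ℂ}
    (hA : A.PosDef) (hB : B.PosDef) : Matrix (Fin n) (Fin n) ℂ :=
  (geomMean_posSemidef hA.inv hB).sqrt * A * (geomMean_posSemidef hA.inv hB).sqrt

def HasPosSpectrum (M : Matrix (Fin n) (Fin n) ℂ) : Prop :=
  ∀ z ∈ spectrum ℂ M, 0 < z.re ∧ z.im = 0

def IsPrincipalSqrt (M S : Matrix (Fin n) (Fin n) ℂ) : Prop :=
  S * S = M ∧ HasPosSpectrum S

noncomputable def absMat (Y : Matrix (Fin n) (Fin n) ℂ) : Matrix (Fin n) (Fin n) ℂ :=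
  (Matrix.posSemidef_conjTranspose_mul_self Y).sqrt

noncomputable def posPart (H : Matrix (Fin n) (Fin n) ℂ) : Matrix (Fin n) (Fin n) ℂ :=
  ((1 : ℂ) / 2) • (absMat H + H)

noncomputable def A18 : Matrix (Fin 2) (Fin 2) ℂ := !![1, 0; 0, 4]

noncomputable def X18 : Matrix (Fin 2) (Fin 2) ℂ := !![1, 1/2; 1/2, 1]

noncomputable def B18 : Matrix (Fin 2) (Fin 2) ℂ := X18 * A18 * X18

/-! ### Auxiliary lemmas -/

lemma psd_smul {M : Matrix (Fin n) (Fin n) ℂ} (hM : M.PosSemidef) {c : ℝ} (hc : 0 ≤ c) :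
    ((c : ℂ) • M).PosSemidef :=
  hM.smul (Complex.zero_le_real.mpr hc)

open scoped MatrixOrder Matrix.Norms.L2Operator in
lemma sqrt_eq_cfc {M : Matrix (Fin 2) (Fin 2) ℂ} (hM : M.PosSemidef) :
    hM.sqrt = CFC.sqrt M := by
  rw [CFC.sqrt_eq_real_sqrt M hM.nonneg, cfcₙ_eq_cfc, hM.1.cfc_eq]; rfl

open scoped MatrixOrder Matrix.Norms.L2Operator in
lemma sqrt_mul_self' {M : Matrix (Fin 2) (Fin 2) ℂ} (hM : M.PosSemidef) :
    hM.sqrt * hM.sqrt = M := by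
  rw [sqrt_eq_cfc]; exact CFC.sqrt_mul_sqrt_self M hM.nonneg

lemma sqrt_eq_of {M S : Matrix (Fin 2) (Fin 2) ℂ} (hM : M.PosSemidef) (hS : S.PosSemidef)
    (h : S * S = M) : hM.sqrt = S := by
  open scoped MatrixOrder Matrix.Norms.L2Operator in
  rw [sqrt_eq_cfc, CFC.sqrt_eq_iff M S hM.nonneg hS.nonneg]; exact h

lemma psd_one2 : (1 : Matrix (Fin 2) (Fin 2) ℂ).PosSemidef := Matrix.PosSemidef.one

lemma psd_diag12 : (!![1,0;0,2] : Matrix (Fin 2) (Fin 2) ℂ).PosSemidef := by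
  have h : (!![1,0;0,2] : Matrix (Fin 2) (Fin 2) ℂ) = Matrix.diagonal ![1,2] := by
    ext i j; fin_cases i <;> fin_cases j <;> simp [Matrix.diagonal]
  rw [h]
  refine Matrix.PosSemidef.diagonal fun i => ?_
  fin_cases i <;> simp

lemma psd_diag1half : (!![1,0;0,1/2] : Matrix (Fin 2) (Fin 2) ℂ).PosSemidef := by
  have h : (!![1,0;0,1/2] : Matrix (Fin 2) (Fin 2) ℂ) = Matrix.diagonal ![1,1/2] := by
    ext i j; fin_cases i <;> fin_cases j <;> simp [Matrix.diagonal]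
  rw [h]
  refine Matrix.PosSemidef.diagonal fun i => ?_
  fin_cases i <;> simp

lemma B18_eq : B18 = !![2, 5/2; 5/2, 17/4] := by
  unfold B18 X18 A18
  rw [Matrix.mul_fin_two, Matrix.mul_fin_two]
  norm_num

lemma sqrtA (hA : A18.PosDef) : hA.posSemidef.sqrt = !![1,0;0,2] := by
  apply sqrt_eq_of _ psd_diag12
  rw [Matrix.mul_fin_two]
  unfold A18
  norm_num

lemma inv_diag12 : (!![1,0;0,2] : Matrix (Fin 2) (Fin 2) ℂ)⁻¹ = !![1,0;0,1/2] := by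
  apply Matrix.inv_eq_right_inv
  rw [Matrix.mul_fin_two, Matrix.one_fin_two]
  norm_num

lemma inv_diag1half : (!![1,0;0,1/2] : Matrix (Fin 2) (Fin 2) ℂ)⁻¹ = !![1,0;0,2] := by
  apply Matrix.inv_eq_right_inv
  rw [Matrix.mul_fin_two, Matrix.one_fin_two]
  norm_num

lemma invA_eq : A18⁻¹ = !![1,0;0,1/4] := by
  apply Matrix.inv_eq_right_inv
  unfold A18
  rw [Matrix.mul_fin_two, Matrix.one_fin_two]
  norm_num

lemma herm_diag1half : (!![1,0;0,1/2] : Matrix (Fin 2) (Fin 2) ℂ).IsHermitian := by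
  ext i j; fin_cases i <;> fin_cases j <;> simp [Matrix.conjTranspose_apply]

lemma herm_diag12 : (!![1,0;0,2] : Matrix (Fin 2) (Fin 2) ℂ).IsHermitian := by
  ext i j; fin_cases i <;> fin_cases j <;> simp [Matrix.conjTranspose_apply]

lemma innerC : (!![1,0;0,1/2] : Matrix (Fin 2) (Fin 2) ℂ) * B18 * !![1,0;0,1/2]
    = !![2, 5/4; 5/4, 17/16] := by
  rw [B18_eq, Matrix.mul_fin_two, Matrix.mul_fin_two]
  norm_num

lemma psd_C (hB : B18.PosDef) :
    (!![2, 5/4; 5/4, 17/16] : Matrix (Fin 2) (Fin 2) ℂ).PosSemidef := by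
  have h := sandwich_posSemidef herm_diag1half hB.posSemidef
  rwa [innerC] at h

lemma psd_M73 (hB : B18.PosDef) :
    (!![11, 5; 5, 29/4] : Matrix (Fin 2) (Fin 2) ℂ).PosSemidef := by
  have h := (psd_smul (psd_C hB) (by norm_num : (0:ℝ) ≤ 4)).add
      (psd_smul psd_one2 (by norm_num : (0:ℝ) ≤ 3))
  have e : ((4:ℝ):ℂ) • (!![2, 5/4; 5/4, 17/16] : Matrix (Fin 2) (Fin 2) ℂ)
      + ((3:ℝ):ℂ) • 1 = !![11, 5; 5, 29/4] := by
    rw [Matrix.one_fin_two]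
    ext i j; fin_cases i <;> fin_cases j <;> simp <;> norm_num
  rwa [e] at h

noncomputable abbrev r73 : ℝ := (Real.sqrt 73)⁻¹

lemma sC_sq : (((r73 : ℂ) • !![11, 5; 5, 29/4]) * ((r73 : ℂ) • !![11, 5; 5, 29/4])
    : Matrix (Fin 2) (Fin 2) ℂ) = !![2, 5/4; 5/4, 17/16] := by
  rw [Matrix.smul_mul, Matrix.mul_smul, smul_smul]
  have hr : r73 * r73 = 73⁻¹ := by
    rw [← mul_inv, Real.mul_self_sqrt (by norm_num)]
  have h73 : (r73 : ℂ) * (r73 : ℂ) = ((73⁻¹ : ℝ) : ℂ) := by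
    rw [← Complex.ofReal_mul, hr]
  rw [h73, Matrix.mul_fin_two]
  ext i j
  fin_cases i <;> fin_cases j <;>
    simp [Complex.ofReal_inv] <;> norm_num

lemma geom_eq (hA : A18.PosDef) (hB : B18.PosDef) :
    geomMean hA hB = (r73 : ℂ) • !![11, 10; 10, 29] := by
  unfold geomMean
  have hmid : (sandwich_posSemidef hA.posSemidef.posSemidef_sqrt.isHermitian.inv
      hB.posSemidef).sqrt
      = (r73 : ℂ) • !![11, 5; 5, 29/4] := by
    apply sqrt_eq_of _ (psd_smul (psd_M73 hB) (by positivity))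
    rw [sC_sq, sqrtA hA, inv_diag12, innerC]
  rw [hmid, sqrtA hA, Matrix.mul_smul, Matrix.smul_mul]
  congr 1
  rw [Matrix.mul_fin_two, Matrix.mul_fin_two]
  norm_num

-- the inverse-side computation
lemma sqrtAinv (hA : A18.PosDef) : hA.inv.posSemidef.sqrt = !![1,0;0,1/2] := by
  apply sqrt_eq_of _ psd_diag1half
  rw [Matrix.mul_fin_two, invA_eq]
  norm_num

lemma innerD : (!![1,0;0,2] : Matrix (Fin 2) (Fin 2) ℂ) * B18 * !![1,0;0,2]
    = !![2, 5; 5, 17] := by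
  rw [B18_eq, Matrix.mul_fin_two, Matrix.mul_fin_two]
  norm_num

lemma psd_D (hB : B18.PosDef) :
    (!![2, 5; 5, 17] : Matrix (Fin 2) (Fin 2) ℂ).PosSemidef := by
  have h := sandwich_posSemidef herm_diag12 hB.posSemidef
  rwa [innerD] at h

lemma psd_T2 (hB : B18.PosDef) :
    (!![1, 1; 1, 4] : Matrix (Fin 2) (Fin 2) ℂ).PosSemidef := by
  have h := (psd_smul (psd_D hB) (by norm_num : (0:ℝ) ≤ 1/5)).add
      (psd_smul psd_one2 (by norm_num : (0:ℝ) ≤ 3/5))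
  have e : ((1/5:ℝ):ℂ) • (!![2, 5; 5, 17] : Matrix (Fin 2) (Fin 2) ℂ)
      + ((3/5:ℝ):ℂ) • 1 = !![1, 1; 1, 4] := by
    rw [Matrix.one_fin_two]
    ext i j; fin_cases i <;> fin_cases j <;> simp <;> norm_num
  rwa [e] at h

lemma geominv_eq (hA : A18.PosDef) (hB : B18.PosDef) :
    geomMean hA.inv hB = X18 := by
  unfold geomMean
  have hmid : (sandwich_posSemidef hA.inv.posSemidef.posSemidef_sqrt.isHermitian.inv
      hB.posSemidef).sqrt = !![1, 1; 1, 4] := by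
    apply sqrt_eq_of _ (psd_T2 hB)
    rw [sqrtAinv hA, inv_diag1half, innerD, Matrix.mul_fin_two]
    norm_num
  rw [hmid, sqrtAinv hA]
  unfold X18
  rw [Matrix.mul_fin_two, Matrix.mul_fin_two]
  norm_num

lemma sum_eig {M : Matrix (Fin 2) (Fin 2) ℂ} (hM : M.IsHermitian) :
    ∑ i, hM.eigenvalues i = M.trace.re := by
  have h := hM.spectral_theorem
  have hU : (star (hM.eigenvectorUnitary : Matrix (Fin 2) (Fin 2) ℂ)) *
      (hM.eigenvectorUnitary : Matrix (Fin 2) (Fin 2) ℂ) = 1 :=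
    Unitary.star_mul_self_of_mem hM.eigenvectorUnitary.2
  have h2 : M.trace = ∑ i, (hM.eigenvalues i : ℂ) := by
    conv_lhs => rw [h, Unitary.conjStarAlgAut_apply]
    rw [Matrix.trace_mul_cycle, hU, Matrix.one_mul, Matrix.trace_diagonal]
    simp
  rw [h2, ← Complex.ofReal_sum]
  simp

lemma spec_trace (hA : A18.PosDef) (hB : B18.PosDef) : (specMean hA hB).trace = 5 := by
  unfold specMean
  rw [Matrix.trace_mul_cycle]
  rw [sqrt_mul_self' (geomMean_posSemidef hA.inv hB), geominv_eq hA hB]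
  unfold X18 A18
  rw [Matrix.mul_fin_two, Matrix.trace_fin_two]
  norm_num

lemma geom_trace (hA : A18.PosDef) (hB : B18.PosDef) :
    (geomMean hA hB).trace = ((40 / Real.sqrt 73 : ℝ) : ℂ) := by
  rw [geom_eq hA hB, Matrix.trace_smul, Matrix.trace_fin_two]
  rw [show (!![11, (10:ℂ); 10, 29] 0 0) = 11 by norm_num,
    show (!![11, (10:ℂ); 10, 29] 1 1) = 29 by norm_num]
  push_cast
  rw [smul_eq_mul, div_eq_inv_mul]
  ring

lemma key_lt : (40 / Real.sqrt 73 : ℝ) < 5 := by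
  have h : (8:ℝ) < Real.sqrt 73 := by
    nlinarith [Real.sq_sqrt (show (0:ℝ) ≤ 73 by norm_num), Real.sqrt_nonneg 73]
  rw [div_lt_iff₀ (by linarith)]
  linarith

set_option maxHeartbeats 2000000 in
/-- the explicit 2×2 example: `Tr(A ♮ B) = 5`,
`Tr(A # B) = 40/√73 < 5`, hence the trace of the Kubo–Ando Heron expression is
strictly smaller, so `A + B + 2(A ♮ B)` is not weakly majorized by
`A + B + 2(A # B)`. -/
theorem trace_counterexample (hA : A18.PosDef) (hB : B18.PosDef)
    (h1 : (A18 + B18 + (2 : ℂ) • specMean hA hB).IsHermitian)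
    (h2 : (A18 + B18 + (2 : ℂ) • geomMean hA hB).IsHermitian) :
    (specMean hA hB).trace = 5 ∧
    (geomMean hA hB).trace = ((40 / Real.sqrt 73 : ℝ) : ℂ) ∧
    (40 / Real.sqrt 73 : ℝ) < 5 ∧
    (A18 + B18 + (2 : ℂ) • geomMean hA hB).trace.re
      < (A18 + B18 + (2 : ℂ) • specMean hA hB).trace.re ∧
    ¬ WeakMaj h1.eigenvalues h2.eigenvalues := by
  have hAtr : A18.trace = 5 := by unfold A18; rw [Matrix.trace_fin_two]; norm_num
  have hBtr : B18.trace = 25/4 := by rw [B18_eq, Matrix.trace_fin_two]; norm_num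
  have hst := spec_trace hA hB
  have hgt := geom_trace hA hB
  have hsum : ∀ T : Matrix (Fin 2) (Fin 2) ℂ,
      (A18 + B18 + (2:ℂ) • T).trace = 45/4 + 2 * T.trace := by
    intro T
    rw [Matrix.trace_add, Matrix.trace_add, Matrix.trace_smul, hAtr, hBtr, smul_eq_mul]
    ring
  have hg : (A18 + B18 + (2 : ℂ) • geomMean hA hB).trace
      = ((45/4 + 2 * (40 / Real.sqrt 73) : ℝ) : ℂ) := by
    rw [hsum, hgt]; push_cast; ring
  have hs : (A18 + B18 + (2 : ℂ) • specMean hA hB).trace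
      = ((45/4 + 2 * 5 : ℝ) : ℂ) := by
    rw [hsum, hst]; push_cast; ring
  have hlt : (A18 + B18 + (2 : ℂ) • geomMean hA hB).trace.re
      < (A18 + B18 + (2 : ℂ) • specMean hA hB).trace.re := by
    rw [hg, hs, Complex.ofReal_re, Complex.ofReal_re]
    linarith [key_lt]
  refine ⟨hst, hgt, key_lt, hlt, ?_⟩
  intro hW
  obtain ⟨t, ht, hle⟩ := hW Finset.univ
  have htu : t = Finset.univ := Finset.eq_univ_of_card t (by rw [ht]; simp)
  rw [htu] at hle
  rw [sum_eig h1, sum_eig h2] at hle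
  linarith

end Heron
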